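/- Let U ⊆ ℝ² be open, n ≥ 1, and let f : U → ℝⁿ be a smooth conformal immersion with conformal factor u. Then u satisfies the Liouville equation −Δu = e^{−2u}(⟨A_{11}, A_{22}⟩ − |A_{12}|²) pointwise on U, where Δu = ∂²_{11}u + ∂²_{22}u and A_{ij} is the second fundamental form of f. (Equivalently, −Δu = K_g e^{2u} where K_g := e^{−4u}(⟨A_{11},A_{22}⟩ − |A_{12}|²) is the Gauss curvature of the induced metric.) -/

import Mathlib

open MeasureTheory Real Filter Topology

noncomputable section

/-- First partial derivative in the `i`-th coordinate direction. -/
def pd {E : Type*} [NormedAddCommGroup E] [NormedSpace ℝ E]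
    (f : EuclideanSpace ℝ (Fin 2) → E) (i : Fin 2) (x : EuclideanSpace ℝ (Fin 2)) : E :=
  fderiv ℝ f x (EuclideanSpace.single i 1)

/-- Second partial derivative `∂_i ∂_j`. -/
def pd2 {E : Type*} [NormedAddCommGroup E] [NormedSpace ℝ E]
    (f : EuclideanSpace ℝ (Fin 2) → E) (i j : Fin 2) (x : EuclideanSpace ℝ (Fin 2)) : E :=
  pd (pd f j) i x

/-- `f` is a smooth conformal immersion on `U` with conformal factor `u`,
i.e. `⟨∂_i f, ∂_j f⟩ = e^{2u} δ_{ij}` on `U`. -/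
def IsConfImm {n : ℕ} (U : Set (EuclideanSpace ℝ (Fin 2)))
    (f : EuclideanSpace ℝ (Fin 2) → EuclideanSpace ℝ (Fin n))
    (u : EuclideanSpace ℝ (Fin 2) → ℝ) : Prop :=
  ContDiffOn ℝ (⊤ : ℕ∞) f U ∧ ContDiffOn ℝ (⊤ : ℕ∞) u U ∧
    ∀ x ∈ U, ∀ i j : Fin 2,
      (inner ℝ (pd f i x) (pd f j x) : ℝ) = Real.exp (2 * u x) * (if i = j then 1 else 0)

/-- Second fundamental form `A_{ij}`: the normal component of the Hessian. -/
def sff {n : ℕ} (f : EuclideanSpace ℝ (Fin 2) → EuclideanSpace ℝ (Fin n))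
    (u : EuclideanSpace ℝ (Fin 2) → ℝ) (i j : Fin 2) (x : EuclideanSpace ℝ (Fin 2)) :
    EuclideanSpace ℝ (Fin n) :=
  pd2 f i j x - Real.exp (-(2 * u x)) •
    ((inner ℝ (pd2 f i j x) (pd f 0 x) : ℝ) • pd f 0 x +
     (inner ℝ (pd2 f i j x) (pd f 1 x) : ℝ) • pd f 1 x)

section helpers
variable {U : Set (EuclideanSpace ℝ (Fin 2))} {x : EuclideanSpace ℝ (Fin 2)}
variable {F : Type*} [NormedAddCommGroup F] [NormedSpace ℝ F]

lemma contDiffOn_pd {g : EuclideanSpace ℝ (Fin 2) → F} (hg : ContDiffOn ℝ (⊤:ℕ∞) g U)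
    (hU : IsOpen U) (i : Fin 2) : ContDiffOn ℝ (⊤:ℕ∞) (pd g i) U := by
  have h1 : ContDiffOn ℝ (⊤:ℕ∞) (fderiv ℝ g) U := hg.fderiv_of_isOpen hU (by simp)
  exact h1.clm_apply contDiffOn_const

lemma diffAt {g : EuclideanSpace ℝ (Fin 2) → F} (hg : ContDiffOn ℝ (⊤:ℕ∞) g U)
    (hU : IsOpen U) (hx : x ∈ U) : DifferentiableAt ℝ g x :=
  ((hg x hx).contDiffAt (hU.mem_nhds hx)).differentiableAt (by simp)

lemma pd_congr {g h : EuclideanSpace ℝ (Fin 2) → F} (hU : IsOpen U) (hx : x ∈ U)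
    (hgh : ∀ y ∈ U, g y = h y) (i : Fin 2) : pd g i x = pd h i x := by
  unfold pd
  rw [Filter.EventuallyEq.fderiv_eq (Filter.eventuallyEq_of_mem (hU.mem_nhds hx) hgh)]

lemma pd_neg {g : EuclideanSpace ℝ (Fin 2) → ℝ} (i : Fin 2) :
    pd (fun y => -(g y)) i x = -(pd g i x) := by
  unfold pd; rw [fderiv_fun_neg]; simp

lemma pd_mul {g h : EuclideanSpace ℝ (Fin 2) → ℝ} (hg : DifferentiableAt ℝ g x)
    (hh : DifferentiableAt ℝ h x) (i : Fin 2) :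
    pd (fun y => g y * h y) i x = pd g i x * h x + g x * pd h i x := by
  unfold pd; rw [fderiv_fun_mul hg hh]; simp [smul_eq_mul]; ring

lemma pd_exp {u : EuclideanSpace ℝ (Fin 2) → ℝ} (hu : DifferentiableAt ℝ u x) (i : Fin 2) :
    pd (fun y => Real.exp (2 * u y)) i x = Real.exp (2 * u x) * (2 * pd u i x) := by
  have h2 : HasFDerivAt (fun y => 2 * u y) ((2:ℝ) • fderiv ℝ u x) x :=
    hu.hasFDerivAt.const_mul 2
  have h3 := h2.exp
  unfold pd
  rw [h3.fderiv]
  simp [smul_eq_mul]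

lemma pd_inner {n : ℕ} {Ff G : EuclideanSpace ℝ (Fin 2) → EuclideanSpace ℝ (Fin n)}
    (hF : DifferentiableAt ℝ Ff x) (hG : DifferentiableAt ℝ G x) (i : Fin 2) :
    pd (fun y => (inner ℝ (Ff y) (G y) : ℝ)) i x
      = (inner ℝ (Ff x) (pd G i x) : ℝ) + (inner ℝ (pd Ff i x) (G x) : ℝ) := by
  unfold pd
  rw [fderiv_inner_apply (𝕜 := ℝ) hF hG]

lemma pd2_symm {g : EuclideanSpace ℝ (Fin 2) → F} (hg : ContDiffOn ℝ (⊤:ℕ∞) g U)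
    (hU : IsOpen U) (hx : x ∈ U) (i j : Fin 2) : pd2 g i j x = pd2 g j i x := by
  have hats : ContDiffAt ℝ (⊤:ℕ∞) g x := (hg x hx).contDiffAt (hU.mem_nhds hx)
  have hsymm := hats.isSymmSndFDerivAt (by
    have h2 : ((2:ℕ∞) : WithTop ℕ∞) ≤ ((⊤:ℕ∞) : WithTop ℕ∞) := WithTop.coe_le_coe.mpr le_top
    simpa using h2)
  have hd : DifferentiableAt ℝ (fderiv ℝ g) x :=
    diffAt (hg.fderiv_of_isOpen hU (by simp)) hU hx
  have key : ∀ a b : Fin 2, pd2 g a b x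
      = fderiv ℝ (fderiv ℝ g) x (EuclideanSpace.single a 1) (EuclideanSpace.single b 1) := by
    intro a b
    unfold pd2 pd
    rw [fderiv_clm_apply hd (differentiableAt_const _)]
    simp
  rw [key i j, key j i, hsymm]

lemma inner_expand {m : ℕ} (A B e0 e1 : EuclideanSpace ℝ (Fin m)) (c a b a' b' : ℝ) :
    (inner ℝ (A - c • (a • e0 + b • e1)) (B - c • (a' • e0 + b' • e1)) : ℝ)
      = (inner ℝ A B : ℝ) - c * (a' * (inner ℝ A e0 : ℝ) + b' * (inner ℝ A e1 : ℝ))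
        - c * (a * (inner ℝ e0 B : ℝ) + b * (inner ℝ e1 B : ℝ))
        + c^2 * (a * a' * (inner ℝ e0 e0 : ℝ) + a * b' * (inner ℝ e0 e1 : ℝ)
                 + b * a' * (inner ℝ e1 e0 : ℝ) + b * b' * (inner ℝ e1 e1 : ℝ)) := by
  simp only [inner_sub_left, inner_sub_right, inner_add_left, inner_add_right,
    real_inner_smul_left, real_inner_smul_right]
  ring

end helpers

/-- Liouville equation: `−Δu = e^{−2u}(⟨A_{11}, A_{22}⟩ − |A_{12}|²)` pointwise on `U`. -/
theorem stmt4 {n : ℕ} (hn : 1 ≤ n) (U : Set (EuclideanSpace ℝ (Fin 2))) (hU : IsOpen U)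
    (f : EuclideanSpace ℝ (Fin 2) → EuclideanSpace ℝ (Fin n))
    (u : EuclideanSpace ℝ (Fin 2) → ℝ) (hf : IsConfImm U f u) :
    ∀ x ∈ U,
      -(pd2 u 0 0 x + pd2 u 1 1 x) =
        Real.exp (-(2 * u x)) *
          ((inner ℝ (sff f u 0 0 x) (sff f u 1 1 x) : ℝ) - ‖sff f u 0 1 x‖ ^ 2) := by
  obtain ⟨hf0, hu0, hconf⟩ := hf
  -- delta facts
  have d00 : (if (0:Fin 2) = 0 then (1:ℝ) else 0) = 1 := if_pos rfl
  have d11 : (if (1:Fin 2) = 1 then (1:ℝ) else 0) = 1 := if_pos rfl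
  have d01 : (if (0:Fin 2) = 1 then (1:ℝ) else 0) = 0 := if_neg (by decide)
  have d10 : (if (1:Fin 2) = 0 then (1:ℝ) else 0) = 0 := if_neg (by decide)
  -- smoothness
  have hf1 : ∀ i, ContDiffOn ℝ (⊤:ℕ∞) (pd f i) U := fun i => contDiffOn_pd hf0 hU i
  have hu1 : ∀ i, ContDiffOn ℝ (⊤:ℕ∞) (pd u i) U := fun i => contDiffOn_pd hu0 hU i
  have hf2 : ∀ i j, ContDiffOn ℝ (⊤:ℕ∞) (pd2 f i j) U :=
    fun i j => contDiffOn_pd (hf1 j) hU i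
  have dF1 : ∀ i, ∀ y ∈ U, DifferentiableAt ℝ (pd f i) y :=
    fun i y hy => diffAt (hf1 i) hU hy
  have dF2 : ∀ i j, ∀ y ∈ U, DifferentiableAt ℝ (pd2 f i j) y :=
    fun i j y hy => diffAt (hf2 i j) hU hy
  have dU : ∀ y ∈ U, DifferentiableAt ℝ u y := fun y hy => diffAt hu0 hU hy
  have dU1 : ∀ i, ∀ y ∈ U, DifferentiableAt ℝ (pd u i) y :=
    fun i y hy => diffAt (hu1 i) hU hy
  -- Schwarz
  have hsym : ∀ y ∈ U, ∀ i j : Fin 2, pd2 f i j y = pd2 f j i y :=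
    fun y hy i j => pd2_symm hf0 hU hy i j
  -- differentiated conformality
  have hD : ∀ y ∈ U, ∀ i j k : Fin 2,
      (inner ℝ (pd2 f i j y) (pd f k y) : ℝ) + (inner ℝ (pd2 f i k y) (pd f j y) : ℝ)
        = 2 * pd u i y * Real.exp (2 * u y) * (if j = k then 1 else 0) := by
    intro y hy i j k
    have e1 : pd (fun z => (inner ℝ (pd f j z) (pd f k z) : ℝ)) i y
        = (inner ℝ (pd f j y) (pd2 f i k y) : ℝ) + (inner ℝ (pd2 f i j y) (pd f k y) : ℝ) :=
      pd_inner (dF1 j y hy) (dF1 k y hy) i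
    have e2 : pd (fun z => Real.exp (2 * u z) * (if j = k then (1:ℝ) else 0)) i y
        = Real.exp (2 * u y) * (2 * pd u i y) * (if j = k then (1:ℝ) else 0) := by
      rw [pd_mul (((dU y hy).const_mul 2).exp) (differentiableAt_const _) i,
        pd_exp (dU y hy)]
      have : pd (fun _ => (if j = k then (1:ℝ) else 0)) i y = 0 := by
        unfold pd; simp
      rw [this]; ring
    have e3 := pd_congr hU hy (fun z hz => hconf z hz j k) i
    rw [e1, e2] at e3
    rw [real_inner_comm (pd2 f i k y) (pd f j y)] at e3
    linarith [e3]
  -- Christoffel symbols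
  have ha : ∀ y ∈ U, ∀ i j k : Fin 2,
      (inner ℝ (pd2 f i j y) (pd f k y) : ℝ)
        = Real.exp (2 * u y) * (pd u i y * (if j = k then 1 else 0)
            + pd u j y * (if i = k then 1 else 0) - pd u k y * (if i = j then 1 else 0)) := by
    intro y hy i j k
    have symI : ∀ a b c : Fin 2,
        (inner ℝ (pd2 f a b y) (pd f c y) : ℝ) = (inner ℝ (pd2 f b a y) (pd f c y) : ℝ) :=
      fun a b c => by rw [hsym y hy a b]
    have h1 := hD y hy i j k
    have h2 := hD y hy j i k
    have h3 := hD y hy k i j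
    have s1 := symI i k j
    have s2 := symI j k i
    have s3 := symI j i k
    have dsym1 : (if i = k then (1:ℝ) else 0) = (if k = i then (1:ℝ) else 0) := by
      by_cases h : i = k <;> simp [h, eq_comm]
    have dsym2 : (if j = k then (1:ℝ) else 0) = (if k = j then (1:ℝ) else 0) := by
      by_cases h : j = k <;> simp [h, eq_comm]
    have dsym3 : (if i = j then (1:ℝ) else 0) = (if j = i then (1:ℝ) else 0) := by
      by_cases h : i = j <;> simp [h, eq_comm]
    linear_combination h1/2 + h2/2 - h3/2 - s1/2 - s2/2 - s3/2
  intro x hx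
  have hcE : Real.exp (-(2 * u x)) * Real.exp (2 * u x) = 1 := by
    rw [← Real.exp_add]; simp
  -- conformality values at x
  have c00 : (inner ℝ (pd f 0 x) (pd f 0 x) : ℝ) = Real.exp (2 * u x) := by
    have h := hconf x hx 0 0; rw [d00] at h; linarith
  have c11 : (inner ℝ (pd f 1 x) (pd f 1 x) : ℝ) = Real.exp (2 * u x) := by
    have h := hconf x hx 1 1; rw [d11] at h; linarith
  have c01 : (inner ℝ (pd f 0 x) (pd f 1 x) : ℝ) = 0 := by
    have h := hconf x hx 0 1; rw [d01] at h; linarith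
  have c10 : (inner ℝ (pd f 1 x) (pd f 0 x) : ℝ) = 0 := by
    have h := hconf x hx 1 0; rw [d10] at h; linarith
  -- Christoffel values at x
  have a000 : (inner ℝ (pd2 f 0 0 x) (pd f 0 x) : ℝ) = Real.exp (2*u x) * pd u 0 x := by
    have h := ha x hx 0 0 0; rw [d00] at h; linear_combination h
  have a001 : (inner ℝ (pd2 f 0 0 x) (pd f 1 x) : ℝ) = -(Real.exp (2*u x) * pd u 1 x) := by
    have h := ha x hx 0 0 1; rw [d01, d00] at h; linear_combination h
  have a110 : (inner ℝ (pd2 f 1 1 x) (pd f 0 x) : ℝ) = -(Real.exp (2*u x) * pd u 0 x) := by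
    have h := ha x hx 1 1 0; rw [d10, d11] at h; linear_combination h
  have a111 : (inner ℝ (pd2 f 1 1 x) (pd f 1 x) : ℝ) = Real.exp (2*u x) * pd u 1 x := by
    have h := ha x hx 1 1 1; rw [d11] at h; linear_combination h
  have a010 : (inner ℝ (pd2 f 0 1 x) (pd f 0 x) : ℝ) = Real.exp (2*u x) * pd u 1 x := by
    have h := ha x hx 0 1 0; rw [d10, d00, d01] at h; linear_combination h
  have a011 : (inner ℝ (pd2 f 0 1 x) (pd f 1 x) : ℝ) = Real.exp (2*u x) * pd u 0 x := by
    have h := ha x hx 0 1 1; rw [d11, d01] at h; linear_combination h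
  have r0_11 : (inner ℝ (pd f 0 x) (pd2 f 1 1 x) : ℝ) = -(Real.exp (2*u x) * pd u 0 x) := by
    rw [real_inner_comm]; exact a110
  have r1_11 : (inner ℝ (pd f 1 x) (pd2 f 1 1 x) : ℝ) = Real.exp (2*u x) * pd u 1 x := by
    rw [real_inner_comm]; exact a111
  have r0_01 : (inner ℝ (pd f 0 x) (pd2 f 0 1 x) : ℝ) = Real.exp (2*u x) * pd u 1 x := by
    rw [real_inner_comm]; exact a010
  have r1_01 : (inner ℝ (pd f 1 x) (pd2 f 0 1 x) : ℝ) = Real.exp (2*u x) * pd u 0 x := by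
    rw [real_inner_comm]; exact a011
  -- key third-derivative identities
  have e1l : pd (fun y => (inner ℝ (pd2 f 0 0 y) (pd f 1 y) : ℝ)) 1 x
      = (inner ℝ (pd2 f 0 0 x) (pd2 f 1 1 x) : ℝ)
        + (inner ℝ (pd (pd2 f 0 0) 1 x) (pd f 1 x) : ℝ) :=
    pd_inner (dF2 0 0 x hx) (dF1 1 x hx) 1
  have e1r : pd (fun y => Real.exp (2*u y) * (-(pd u 1 y))) 1 x
      = Real.exp (2*u x) * (2*pd u 1 x) * (-(pd u 1 x))
        + Real.exp (2*u x) * (-(pd2 u 1 1 x)) := by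
    rw [pd_mul (h := fun y => -(pd u 1 y)) (((dU x hx).const_mul 2).exp) ((dU1 1 x hx).neg) 1, pd_exp (dU x hx)]
    have hh : pd (fun y => -(pd u 1 y)) 1 x = -(pd2 u 1 1 x) := pd_neg 1
    rw [hh]
  have hcong1 : pd (fun y => (inner ℝ (pd2 f 0 0 y) (pd f 1 y) : ℝ)) 1 x
      = pd (fun y => Real.exp (2*u y) * (-(pd u 1 y))) 1 x := by
    refine pd_congr hU hx (fun y hy => ?_) 1
    have h := ha y hy 0 0 1
    rw [d01, d00] at h
    linear_combination h
  have key1 : (inner ℝ (pd2 f 0 0 x) (pd2 f 1 1 x) : ℝ)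
        + (inner ℝ (pd (pd2 f 0 0) 1 x) (pd f 1 x) : ℝ)
      = Real.exp (2*u x) * (2*pd u 1 x) * (-(pd u 1 x))
        + Real.exp (2*u x) * (-(pd2 u 1 1 x)) := by
    rw [← e1l, hcong1, e1r]
  have e2l : pd (fun y => (inner ℝ (pd2 f 1 0 y) (pd f 1 y) : ℝ)) 0 x
      = (inner ℝ (pd2 f 1 0 x) (pd2 f 0 1 x) : ℝ)
        + (inner ℝ (pd (pd2 f 1 0) 0 x) (pd f 1 x) : ℝ) :=
    pd_inner (dF2 1 0 x hx) (dF1 1 x hx) 0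
  have e2r : pd (fun y => Real.exp (2*u y) * pd u 0 y) 0 x
      = Real.exp (2*u x) * (2*pd u 0 x) * pd u 0 x
        + Real.exp (2*u x) * pd2 u 0 0 x := by
    rw [pd_mul (((dU x hx).const_mul 2).exp) (dU1 0 x hx) 0, pd_exp (dU x hx)]
    have hh : pd (fun y => pd u 0 y) 0 x = pd2 u 0 0 x := rfl
    rw [hh]
  have hcong2 : pd (fun y => (inner ℝ (pd2 f 1 0 y) (pd f 1 y) : ℝ)) 0 x
      = pd (fun y => Real.exp (2*u y) * pd u 0 y) 0 x := by
    refine pd_congr hU hx (fun y hy => ?_) 0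
    have h := ha y hy 1 0 1
    rw [d01, d11, d10] at h
    linear_combination h
  have key2 : (inner ℝ (pd2 f 1 0 x) (pd2 f 0 1 x) : ℝ)
        + (inner ℝ (pd (pd2 f 1 0) 0 x) (pd f 1 x) : ℝ)
      = Real.exp (2*u x) * (2*pd u 0 x) * pd u 0 x
        + Real.exp (2*u x) * pd2 u 0 0 x := by
    rw [← e2l, hcong2, e2r]
  have hT : pd (pd2 f 0 0) 1 x = pd (pd2 f 1 0) 0 x := pd2_symm (hf1 0) hU hx 1 0
  have h10x : pd2 f 1 0 x = pd2 f 0 1 x := hsym x hx 1 0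
  have hGauss : (inner ℝ (pd2 f 0 0 x) (pd2 f 1 1 x) : ℝ)
        - (inner ℝ (pd2 f 0 1 x) (pd2 f 0 1 x) : ℝ)
      = -(Real.exp (2*u x)) * (pd2 u 0 0 x + pd2 u 1 1 x
          + 2*(pd u 0 x)^2 + 2*(pd u 1 x)^2) := by
    rw [hT] at key1
    rw [h10x] at key2
    linear_combination key1 - key2
  -- final assembly
  rw [show ‖sff f u 0 1 x‖^2 = (inner ℝ (sff f u 0 1 x) (sff f u 0 1 x) : ℝ) from
    (real_inner_self_eq_norm_sq _).symm]
  simp only [sff]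
  rw [inner_expand, inner_expand]
  rw [a000, a001, a110, a111, a010, a011, r0_11, r1_11, r0_01, r1_01, c00, c01, c10, c11]
  linear_combination (-(Real.exp (-(2*u x)))) * hGauss
    + ((pd2 u 0 0 x + pd2 u 1 1 x)
       + 2*(Real.exp (-(2*u x)) * Real.exp (2*u x))*((pd u 0 x)^2+(pd u 1 x)^2)
         *(Real.exp (-(2*u x)) * Real.exp (2*u x) - 1)) * hcE
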